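/- For every μ ∈ K with μ ≠ 0: ∑_{z ∈ S} χ_m(μ·(z + z⁻¹)) = −k_m(μ). (Note that μ·(z + z⁻¹) ∈ K for every z ∈ S, so χ_m applies.) -/

import Mathlib

open Finset

/-- Absolute trace-style sum `Tr_n : F → F` for `n = 2m`. -/
def trN (m : ℕ) {F : Type*} [Field F] (x : F) : F :=
  ∑ i ∈ Finset.range (2 * m), x ^ (2 ^ i)

/-- Trace-style sum `Tr_m : F → F` (meant for elements of the subfield `K`). -/
def trM (m : ℕ) {F : Type*} [Field F] (x : F) : F :=
  ∑ i ∈ Finset.range m, x ^ (2 ^ i)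

/-- `ε(0) = 1`, `ε(t) = -1` for `t ≠ 0`. -/
def eps {F : Type*} [Field F] [DecidableEq F] (t : F) : ℤ :=
  if t = 0 then 1 else -1

/-- Kloosterman sum `k_m(μ) = ∑_{x ∈ K, x ≠ 0} χ_m(x + μ x⁻¹)`. -/
def klooM (m : ℕ) {F : Type*} [Field F] [Fintype F] [DecidableEq F] (μ : F) : ℤ :=
  ∑ x ∈ Finset.univ.filter (fun x : F => x ^ (2 ^ m) = x ∧ x ≠ 0),
    eps (trM m (x + μ * x⁻¹))

/-- Kloosterman sum over the big field: `k_n(μ) = ∑_{x ∈ F, x ≠ 0} χ_n(x + μ x⁻¹)`. -/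
def klooN (m : ℕ) {F : Type*} [Field F] [Fintype F] [DecidableEq F] (μ : F) : ℤ :=
  ∑ x ∈ Finset.univ.filter (fun x : F => x ≠ 0), eps (trN m (x + μ * x⁻¹))

/-- Walsh transform of `h : F → F` (with values in `{0,1}`) at `a`. -/
def walsh (m : ℕ) {F : Type*} [Field F] [Fintype F] [DecidableEq F] (h : F → F) (a : F) : ℤ :=
  ∑ x : F, eps (h x + trN m (a * x))

/-- The Boolean function `f_{λ,μ}(x) = Tr_n(λ x^{2^m+1}) + Tr_n(x)·Tr_n(μ x^{2^m-1})`. -/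
def fFun (m : ℕ) {F : Type*} [Field F] (l μ : F) : F → F :=
  fun x => trN m (l * x ^ (2 ^ m + 1)) + trN m x * trN m (μ * x ^ (2 ^ m - 1))

/-- The Boolean function
`g_{λ,μ}(x) = (1 + Tr_n(x))·Tr_n(λ x^{2^m+1}) + Tr_n(x)·Tr_n(μ x^{2^m-1})`. -/
def gFun (m : ℕ) {F : Type*} [Field F] (l μ : F) : F → F :=
  fun x => (1 + trN m x) * trN m (l * x ^ (2 ^ m + 1)) +
    trN m x * trN m (μ * x ^ (2 ^ m - 1))

open Polynomial

section Aux
variable {F : Type*} [Field F] [Fintype F] [DecidableEq F]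

lemma charF2 {m : ℕ} (hm : 0 < m) (hcard : Fintype.card F = 2 ^ (2*m)) : CharP F 2 := by
  haveI := ringChar.charP F
  obtain ⟨n, hp, h⟩ := @FiniteField.card F _ _ (ringChar F) (ringChar.charP F)
  rw [hcard] at h
  have hdvd : ringChar F ∣ 2 ^ (2*m) := by
    rw [h]; exact dvd_pow_self _ (by positivity)
  have h2 : ringChar F = 2 := by
    have := hp.dvd_of_dvd_pow (n := 2*m) (m := 2) hdvd
    rcases (Nat.le_of_dvd (by norm_num) this).lt_or_eq with hl | he
    · interval_cases hrc : ringChar F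
      · exact absurd rfl hp.ne_zero
      · exact absurd rfl hp.ne_one
    · exact he
  exact h2 ▸ ringChar.charP F

/-- Any nonzero divisor of `X^q - X` has exactly `natDegree` roots, as a `filter` of `univ`. -/
lemma card_eval_zero (P : Polynomial F) (hP : P ≠ 0)
    (hdvd : P ∣ (X ^ (Fintype.card F) - X)) :
    (univ.filter fun x : F => P.eval x = 0).card = P.natDegree := by
  have h1 : (1:ℕ) < Fintype.card F := Fintype.one_lt_card
  have hq0 : (X ^ (Fintype.card F) - X : F[X]) ≠ 0 :=
    FiniteField.X_pow_card_sub_X_ne_zero F h1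
  have hroots : (X ^ (Fintype.card F) - X : F[X]).roots = Finset.univ.val :=
    FiniteField.roots_X_pow_card_sub_X F
  have hsplit : Splits (X ^ (Fintype.card F) - X : F[X]) := by
    rw [splits_iff_card_roots, hroots, FiniteField.X_pow_card_sub_X_natDegree_eq F h1]
    exact Finset.card_univ
  have hPsplit : Splits P := hsplit.of_dvd hq0 hdvd
  have hle : P.roots ≤ (X ^ (Fintype.card F) - X : F[X]).roots := roots.le_of_dvd hq0 hdvd
  have hnodup : P.roots.Nodup := Multiset.nodup_of_le hle (hroots ▸ Finset.univ.nodup)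
  have hfilter : (univ.filter fun x : F => P.eval x = 0) = P.roots.toFinset := by
    ext x
    simp [Multiset.mem_toFinset, mem_roots hP, IsRoot.def]
  rw [hfilter, Multiset.toFinset_card_of_nodup hnodup]
  exact splits_iff_card_roots.mp hPsplit

end Aux

section Aux2
variable {F : Type*} [Field F] [Fintype F] [DecidableEq F] {m : ℕ}

set_option linter.unusedSectionVars false

lemma pow_arith (hm : 0 < m) : (2^m + 1) * (2^m - 1) = 2^(2*m) - 1 ∧ 2^(2*m) = 2^m * 2^m ∧ 2^m = 2 * 2^(m-1) := by
  obtain ⟨b, hb⟩ : ∃ b, 2^m = b + 1 := ⟨2^m - 1, by have := Nat.one_le_two_pow (n := m); omega⟩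
  refine ⟨?_, by rw [two_mul, pow_add], ?_⟩
  · rw [two_mul, pow_add, hb]
    have h1 : (b+1+1)*(b+1-1) = b*b+2*b := by simp; ring
    have h2 : (b+1)*(b+1) = b*b+2*b+1 := by ring
    omega
  · obtain ⟨k, rfl⟩ := Nat.exists_eq_add_of_le hm
    simp [pow_succ, Nat.add_sub_cancel]; ring

lemma card_K (hm : 0 < m) (hcard : Fintype.card F = 2 ^ (2*m)) [CharP F 2] :
    (univ.filter fun x : F => x ^ (2^m) = x).card = 2^m := by
  haveI : CharP F[X] 2 := Polynomial.instCharP 2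
  have hlt : (X : F[X]).natDegree < ((X:F[X]) ^ (2^m)).natDegree := by
    simpa using Nat.one_lt_two_pow_iff.mpr hm.ne'
  have hdeg : (X ^ (2^m) - X : F[X]).natDegree = 2^m := by
    rw [natDegree_sub_eq_left_of_natDegree_lt hlt, natDegree_X_pow]
  have hne : (X ^ (2^m) - X : F[X]) ≠ 0 := by
    intro h0
    rw [h0] at hdeg
    simp only [natDegree_zero] at hdeg
    have := pow_pos (by norm_num : (0:ℕ) < 2) m
    omega
  have hdvd : (X ^ (2^m) - X : F[X]) ∣ (X ^ (Fintype.card F) - X) := by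
    refine ⟨(X ^ (2^m) - X : F[X])^(2^m - 1) + 1, ?_⟩
    have frob : ((X : F[X]) ^ (2^m) - X)^(2^m) = X ^ (2^(2*m)) - X ^ (2^m) := by
      rw [CharTwo.sub_eq_add, CharTwo.sub_eq_add, add_pow_char_pow (p := 2),
        ← pow_mul, ← pow_add, two_mul]
    calc (X ^ (Fintype.card F) - X : F[X])
        = (X ^ (2^m) - X : F[X])^(2^m) + (X ^ (2^m) - X) := by
          rw [frob, hcard]; ring
      _ = (X ^ (2^m) - X : F[X]) * ((X ^ (2^m) - X)^(2^m - 1) + 1) := by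
          rw [mul_add, mul_one, ← pow_succ']
          congr 2
          have := Nat.one_le_two_pow (n := m); omega
  have hres := card_eval_zero (X ^ (2^m) - X : F[X]) hne hdvd
  rw [hdeg] at hres
  have hfeq : (univ.filter fun x : F => eval x ((X:F[X]) ^ (2^m) - X) = 0)
      = (univ.filter fun x : F => x ^ (2^m) = x) := by
    apply Finset.filter_congr
    intro x _
    simp [sub_eq_zero]
  rw [← hfeq]
  exact hres

lemma card_S (hm : 0 < m) (hcard : Fintype.card F = 2 ^ (2*m)) :
    (univ.filter fun z : F => z ^ (2^m + 1) = 1).card = 2^m + 1 := by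
  have hdeg : (X ^ (2^m + 1) - 1 : F[X]).natDegree = 2^m + 1 := by
    rw [← Polynomial.C_1, natDegree_X_pow_sub_C]
  have hne : (X ^ (2^m + 1) - 1 : F[X]) ≠ 0 := by
    intro h0; rw [h0, natDegree_zero] at hdeg; exact (Nat.succ_ne_zero _) hdeg.symm
  have hdvd1 : (X ^ (2^m + 1) - 1 : F[X]) ∣ (X ^ (2^(2*m) - 1) - 1) := by
    have := sub_dvd_pow_sub_pow ((X : F[X]) ^ (2^m+1)) 1 (2^m - 1)
    rw [one_pow, ← pow_mul, (pow_arith hm).1] at this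
    exact this
  have hdvd : (X ^ (2^m + 1) - 1 : F[X]) ∣ (X ^ (Fintype.card F) - X) := by
    refine hdvd1.trans ⟨X, ?_⟩
    rw [sub_mul, one_mul, ← pow_succ, hcard]
    congr 2
    have h1 : (1:ℕ) ≤ 2^(2*m) := Nat.one_le_two_pow
    omega
  have hres := card_eval_zero (X ^ (2^m + 1) - 1 : F[X]) hne hdvd
  rw [hdeg] at hres
  have hfeq : (univ.filter fun x : F => eval x ((X:F[X]) ^ (2^m + 1) - 1) = 0)
      = (univ.filter fun z : F => z ^ (2^m + 1) = 1) := by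
    apply Finset.filter_congr
    intro x _
    simp [sub_eq_zero]
  rw [← hfeq]
  exact hres

end Aux2

section Aux3
variable {F : Type*} [Field F] [Fintype F] [DecidableEq F] {m : ℕ}

set_option linter.unusedSectionVars false

lemma trM_add [CharP F 2] (x y : F) : trM m (x + y) = trM m x + trM m y := by
  unfold trM
  rw [← Finset.sum_add_distrib]
  exact Finset.sum_congr rfl fun i _ => add_pow_char_pow (p := 2) ..

lemma trM_zero : trM m (0:F) = 0 := by
  unfold trM
  apply Finset.sum_eq_zero
  intro i _
  exact zero_pow (by positivity)

lemma trM_sq [CharP F 2] {x : F} (hx : x ^ (2^m) = x) : trM m (x * x) = trM m x := by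
  have key : trM m (x * x) + x = trM m x + x := by
    have h1 : ∀ i : ℕ, (x * x) ^ (2^i) = x ^ (2^(i+1)) := by
      intro i
      rw [← sq, ← pow_mul, pow_succ, Nat.mul_comm (2^i) 2]
    calc trM m (x * x) + x
        = ∑ i ∈ Finset.range m, x ^ (2^(i+1)) + x ^ (2^0) := by
          unfold trM
          rw [Finset.sum_congr rfl fun i _ => h1 i]
          norm_num
      _ = ∑ i ∈ Finset.range (m+1), x ^ (2^i) := (Finset.sum_range_succ' (fun i => x ^ (2^i)) m).symm
      _ = ∑ i ∈ Finset.range m, x ^ (2^i) + x ^ (2^m) := Finset.sum_range_succ _ _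
      _ = trM m x + x := by rw [hx]; rfl
  exact add_right_cancel key

lemma trM_bool [CharP F 2] {x : F} (hx : x ^ (2^m) = x) : trM m x = 0 ∨ trM m x = 1 := by
  have hsq : trM m x * trM m x = trM m x := by
    have : trM m x * trM m x = trM m (x * x) := by
      unfold trM
      rw [CharTwo.sum_mul_self]
      exact Finset.sum_congr rfl fun i _ => (mul_pow ..).symm
    rw [this, trM_sq hx]
  have h0 : trM m x * (trM m x - 1) = 0 := by rw [mul_sub, hsq]; ring
  rcases mul_eq_zero.mp h0 with h | h
  · exact Or.inl h
  · exact Or.inr (sub_eq_zero.mp h)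

end Aux3

section Aux4
variable {F : Type*} [Field F] [Fintype F] [DecidableEq F] {m : ℕ}

set_option linter.unusedSectionVars false

open Polynomial in
lemma exists_trM_one (hm : 0 < m) (hcard : Fintype.card F = 2 ^ (2*m)) [CharP F 2] :
    ∃ w : F, w ^ (2^m) = w ∧ trM m w = 1 := by
  by_contra hcon
  push_neg at hcon
  have hall : ∀ w : F, w ^ (2^m) = w → trM m w = 0 := by
    intro w hw
    rcases trM_bool hw with h | h
    · exact h
    · exact absurd h (hcon w hw)
  set P : F[X] := ∑ i ∈ Finset.range m, X ^ (2^i) with hP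
  have hPne : P ≠ 0 := by
    intro h0
    have hc : P.coeff 1 = 1 := by
      rw [hP, finset_sum_coeff]
      have : ∀ i ∈ Finset.range m, ((X : F[X]) ^ (2^i)).coeff 1 = if i = 0 then 1 else 0 := by
        intro i _
        rw [coeff_X_pow]
        congr 1
        · simp only [eq_iff_iff]
          constructor
          · intro h
            by_contra hi
            have : 2 ≤ 2^i := Nat.one_lt_two_pow_iff.mpr hi
            omega
          · rintro rfl; rfl
      rw [Finset.sum_congr rfl this, Finset.sum_ite_eq' (Finset.range m) 0 (fun _ => (1:F))]
      simp [Finset.mem_range, hm]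
    rw [h0] at hc
    simp at hc
  have hdeg : P.natDegree ≤ 2^(m-1) := by
    apply natDegree_sum_le_of_forall_le
    intro i hi
    rw [natDegree_X_pow]
    exact Nat.pow_le_pow_right (by norm_num) (by simp at hi; omega)
  have hsub : (univ.filter fun x : F => x ^ (2^m) = x) ⊆ P.roots.toFinset := by
    intro w hw
    simp only [Finset.mem_filter] at hw
    rw [Multiset.mem_toFinset, mem_roots hPne]
    have : P.eval w = trM m w := by
      rw [hP]
      simp [eval_finset_sum, trM]
    rw [IsRoot.def, this]
    exact hall w hw.2
  have h1 : (univ.filter fun x : F => x ^ (2^m) = x).card ≤ P.roots.toFinset.card :=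
    Finset.card_le_card hsub
  have h2 : P.roots.toFinset.card ≤ Multiset.card P.roots := Multiset.toFinset_card_le _
  have h3 : Multiset.card P.roots ≤ P.natDegree := P.card_roots'
  rw [card_K hm hcard] at h1
  have hlt : 2^(m-1) < 2^m := Nat.pow_lt_pow_right (by norm_num) (by omega)
  omega

lemma sum_eps_K (hm : 0 < m) (hcard : Fintype.card F = 2 ^ (2*m)) [CharP F 2] :
    ∑ v ∈ univ.filter (fun x : F => x ^ (2^m) = x), eps (trM m v) = 0 := by
  obtain ⟨w, hwK, hw1⟩ := exists_trM_one hm hcard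
  have hw0 : w ≠ 0 := by
    intro h; rw [h, trM_zero] at hw1; exact one_ne_zero hw1.symm
  apply Finset.sum_involution (g := fun v _ => v + w)
  · intro a ha
    simp only [Finset.mem_filter, Finset.mem_univ, true_and] at ha
    rw [trM_add, hw1]
    rcases trM_bool ha with h | h <;>
      simp [eps, h, one_add_one_eq_two, CharTwo.two_eq_zero]
  · intro a ha _
    simp [hw0]
  · intro a ha
    simp only [Finset.mem_filter, Finset.mem_univ, true_and] at ha ⊢
    rw [add_pow_char_pow (p := 2), ha, hwK]
  · intro a ha
    rw [add_assoc, CharTwo.add_self_eq_zero, add_zero]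

end Aux4

section Aux5
variable {F : Type*} [Field F] [Fintype F] [DecidableEq F] {m : ℕ}

set_option linter.unusedSectionVars false

lemma sum_eps_K_mul (hm : 0 < m) (hcard : Fintype.card F = 2 ^ (2*m)) [CharP F 2]
    {μ : F} (hμK : μ ^ (2^m) = μ) (hμ0 : μ ≠ 0) :
    ∑ u ∈ univ.filter (fun x : F => x ^ (2^m) = x), eps (trM m (μ * u)) = 0 := by
  rw [show (∑ u ∈ univ.filter (fun x : F => x ^ (2^m) = x), eps (trM m (μ * u)))
      = ∑ v ∈ univ.filter (fun x : F => x ^ (2^m) = x), eps (trM m v) from ?_]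
  · exact sum_eps_K hm hcard
  · apply Finset.sum_nbij' (i := fun u => μ * u) (j := fun v => μ⁻¹ * v)
    · intro a ha
      simp only [Finset.mem_filter, Finset.mem_univ, true_and] at ha ⊢
      rw [mul_pow, ha, hμK]
    · intro a ha
      simp only [Finset.mem_filter, Finset.mem_univ, true_and] at ha ⊢
      rw [mul_pow, ha, inv_pow, hμK]
    · intro a _; field_simp
    · intro a _; field_simp
    · intro a _; rfl

end Aux5

section Aux6
variable {F : Type*} [Field F] [Fintype F] [DecidableEq F] {m : ℕ}

set_option linter.unusedSectionVars false

lemma klooM_eq (hm : 0 < m) [CharP F 2]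
    {μ : F} (hμK : μ ^ (2^m) = μ) (hμ0 : μ ≠ 0) :
    klooM m μ = ∑ y ∈ univ.filter (fun x : F => x ^ (2^m) = x ∧ x ≠ 0),
      eps (trM m (μ * (y + y⁻¹))) := by
  have h2m : 2^m = 2 * 2^(m-1) := by
    obtain ⟨k, rfl⟩ := Nat.exists_eq_add_of_le hm
    simp [pow_succ, Nat.add_sub_cancel]; ring
  unfold klooM
  refine Finset.sum_nbij' (i := fun x => μ⁻¹ * x^2) (j := fun y => (μ*y)^(2^(m-1)))
    ?_ ?_ ?_ ?_ ?_
  · intro x hx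
    simp only [Finset.mem_filter, Finset.mem_univ, true_and] at hx ⊢
    obtain ⟨hxK, hx0⟩ := hx
    refine ⟨?_, by simp [hx0, hμ0]⟩
    rw [mul_pow, inv_pow, hμK, ← pow_mul, Nat.mul_comm 2 (2^m), pow_mul, hxK]
  · intro y hy
    simp only [Finset.mem_filter, Finset.mem_univ, true_and] at hy ⊢
    obtain ⟨hyK, hy0⟩ := hy
    have htK : (μ * y) ^ (2^m) = μ * y := by rw [mul_pow, hμK, hyK]
    refine ⟨?_, pow_ne_zero _ (mul_ne_zero hμ0 hy0)⟩
    rw [← pow_mul, Nat.mul_comm (2^(m-1)) (2^m), pow_mul, htK]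
  · intro x hx
    simp only [Finset.mem_filter, Finset.mem_univ, true_and] at hx
    obtain ⟨hxK, hx0⟩ := hx
    rw [← mul_assoc, mul_inv_cancel₀ hμ0, one_mul, ← pow_mul, ← h2m, hxK]
  · intro y hy
    simp only [Finset.mem_filter, Finset.mem_univ, true_and] at hy
    obtain ⟨hyK, hy0⟩ := hy
    have htK : (μ * y) ^ (2^m) = μ * y := by rw [mul_pow, hμK, hyK]
    rw [← pow_mul, Nat.mul_comm (2^(m-1)) 2, ← h2m, htK, ← mul_assoc,
      inv_mul_cancel₀ hμ0, one_mul]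
  · intro x hx
    simp only [Finset.mem_filter, Finset.mem_univ, true_and] at hx
    obtain ⟨hxK, hx0⟩ := hx
    congr 1
    have htK : (x + μ * x⁻¹) ^ (2^m) = x + μ * x⁻¹ := by
      rw [add_pow_char_pow (p := 2), mul_pow, inv_pow, hxK, hμK]
    have key : μ * (μ⁻¹ * x^2 + (μ⁻¹ * x^2)⁻¹) = (x + μ * x⁻¹) * (x + μ * x⁻¹) := by
      rw [CharTwo.add_mul_self]
      field_simp
    rw [key, trM_sq htK]

end Aux6

theorem stmt3 (m : ℕ) (hm : 0 < m) (F : Type*) [Field F] [Fintype F] [DecidableEq F]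
    (hcard : Fintype.card F = 2 ^ (2 * m))
    (μ : F) (hμK : μ ^ (2 ^ m) = μ) (hμ0 : μ ≠ 0) :
    ∑ z ∈ Finset.univ.filter (fun z : F => z ^ (2 ^ m + 1) = 1),
      eps (trM m (μ * (z + z⁻¹))) = - klooM m μ := by
  haveI hch : CharP F 2 := charF2 hm hcard
  classical
  set g : F → ℤ := fun u => eps (trM m (μ * u)) with hg
  set Kfin := univ.filter (fun x : F => x ^ (2^m) = x) with hKfin
  set Afin := univ.filter (fun z : F => z ^ (2^m + 1) = 1) with hAfin
  set Bfin := univ.filter (fun x : F => x ^ (2^m) = x ∧ x ≠ 0) with hBfin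
  have h11 : (1:F) + 1 = 0 := by
    rw [one_add_one_eq_two, CharTwo.two_eq_zero]
  have hsqinj : ∀ u v : F, u * u = v * v → u = v := by
    intro u v h
    have : (u + v) * (u + v) = 0 := by rw [CharTwo.add_mul_self, h, CharTwo.add_self_eq_zero]
    have := mul_self_eq_zero.mp this
    calc u = u + 0 := (add_zero u).symm
    _ = u + (u + v) := by rw [this]
    _ = v := by rw [← add_assoc, CharTwo.add_self_eq_zero, zero_add]
  have hA : ∀ z ∈ Afin, z ≠ 0 ∧ z ^ (2^m) = z⁻¹ := by
    intro z hz
    simp only [hAfin, Finset.mem_filter, Finset.mem_univ, true_and] at hz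
    have hz0 : z ≠ 0 := by
      intro h0
      rw [h0, zero_pow (by positivity)] at hz
      exact zero_ne_one hz
    refine ⟨hz0, ?_⟩
    have : z ^ (2^m) * z = 1 := by rw [← pow_succ, hz]
    field_simp
    linear_combination this
  have hone_mem : (1:F) ∈ Afin := by
    simp [hAfin]
  have hmapsto : ∀ z ∈ Afin ∪ Bfin, z + z⁻¹ ∈ Kfin := by
    intro z hz
    simp only [hKfin, Finset.mem_filter, Finset.mem_univ, true_and]
    rcases Finset.mem_union.mp hz with h | h
    · obtain ⟨hz0, hzi⟩ := hA z h
      rw [add_pow_char_pow (p := 2), hzi, inv_pow, hzi, inv_inv, add_comm]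
    · simp only [hBfin, Finset.mem_filter, Finset.mem_univ, true_and] at h
      rw [add_pow_char_pow (p := 2), h.1, inv_pow, h.1]
  have hz_ne : ∀ z ∈ Afin ∪ Bfin, z ≠ 0 := by
    intro z hz
    rcases Finset.mem_union.mp hz with h | h
    · exact (hA z h).1
    · simp only [hBfin, Finset.mem_filter, Finset.mem_univ, true_and] at h
      exact h.2
  have hquad : ∀ z ∈ Afin ∪ Bfin, ∀ u : F, z + z⁻¹ = u → z * z + 1 = u * z := by
    intro z hz u hu
    have hz0 := hz_ne z hz
    field_simp at hu
    linear_combination hu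
  -- fiber over 0 is {1}
  have hfib0 : (Afin ∪ Bfin).filter (fun z => z + z⁻¹ = 0) = {1} := by
    ext z
    simp only [Finset.mem_filter, Finset.mem_singleton]
    constructor
    · rintro ⟨hz, hzu⟩
      have h := hquad z hz 0 hzu
      rw [zero_mul] at h
      have hzz : z * z = 1 := by
        have := eq_neg_of_add_eq_zero_left h
        rwa [CharTwo.neg_eq] at this
      exact hsqinj z 1 (by rw [hzz, one_mul])
    · rintro rfl
      refine ⟨Finset.mem_union_left _ hone_mem, by rw [inv_one, h11]⟩
  -- every fiber has at most 2 elements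
  have hfible : ∀ u : F, ((Afin ∪ Bfin).filter (fun z => z + z⁻¹ = u)).card ≤ 2 := by
    intro u
    by_contra hc
    push_neg at hc
    obtain ⟨a, b, c, ha, hb, hcmem, hab, hac, hbc⟩ := Finset.two_lt_card_iff.mp hc
    simp only [Finset.mem_filter] at ha hb hcmem
    have key : ∀ x y : F, x ∈ Afin ∪ Bfin → y ∈ Afin ∪ Bfin → x + x⁻¹ = u → y + y⁻¹ = u →
        x ≠ y → x + y = u := by
      intro x y hx hy hxu hyu hxy
      have h1 := hquad x hx u hxu
      have h2 := hquad y hy u hyu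
      have h3 : (x + y) * (x + y) = u * (x + y) := by
        linear_combination h1 + h2 + (x*y - 1) * h11
      have hxy0 : x + y ≠ 0 := by
        intro h0
        refine hxy ?_
        have : y = x := by
          calc y = x + x + y := by rw [CharTwo.add_self_eq_zero, zero_add]
          _ = x + (x + y) := by ring
          _ = x := by rw [h0, add_zero]
        exact this.symm
      exact mul_right_cancel₀ hxy0 h3
    have e1 := key a b ha.1 hb.1 ha.2 hb.2 hab
    have e2 := key a c ha.1 hcmem.1 ha.2 hcmem.2 hac
    apply hbc
    have : a + b = a + c := by rw [e1, e2]
    calc b = a + (a + b) := by rw [← add_assoc, CharTwo.add_self_eq_zero, zero_add]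
    _ = a + (a + c) := by rw [this]
    _ = c := by rw [← add_assoc, CharTwo.add_self_eq_zero, zero_add]
  -- cardinalities
  have h0K : (0:F) ∈ Kfin := by simp [hKfin, zero_pow (show 2^m ≠ 0 by positivity)]
  have hBerase : Bfin = Kfin.erase 0 := by
    ext x
    simp only [hBfin, hKfin, Finset.mem_filter, Finset.mem_univ, true_and, Finset.mem_erase]
    tauto
  have hcardK : Kfin.card = 2^m := card_K hm hcard
  have hcardB : Bfin.card = 2^m - 1 := by
    rw [hBerase, Finset.card_erase_of_mem h0K, hcardK]
  have hcardA : Afin.card = 2^m + 1 := card_S hm hcard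
  have hinter : Afin ∩ Bfin = {1} := by
    ext z
    simp only [Finset.mem_inter, hAfin, hBfin, Finset.mem_filter, Finset.mem_univ, true_and,
      Finset.mem_singleton]
    constructor
    · rintro ⟨h1, h2, h3⟩
      have : z * z = 1 * 1 := by
        rw [one_mul, ← h1, pow_succ, h2]
      exact hsqinj z 1 this
    · rintro rfl
      exact ⟨one_pow _, one_pow _, one_ne_zero⟩
  have hcardU : (Afin ∪ Bfin).card = 2^(m+1) - 1 := by
    have := Finset.card_union_add_card_inter Afin Bfin
    rw [hinter, hcardA, hcardB, Finset.card_singleton] at this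
    have h1 : (1:ℕ) ≤ 2^m := Nat.one_le_two_pow
    rw [pow_succ]
    omega
  -- fiberwise sum
  have hsumfib : ∑ u ∈ Kfin, ((Afin ∪ Bfin).filter (fun z => z + z⁻¹ = u)).card
      = 2^(m+1) - 1 := by
    rw [← Finset.card_eq_sum_card_fiberwise hmapsto, hcardU]
  have hfib0card : ((Afin ∪ Bfin).filter (fun z => z + z⁻¹ = (0:F))).card = 1 := by
    rw [hfib0]; rfl
  have hsum_erase : ∑ u ∈ Kfin.erase 0, ((Afin ∪ Bfin).filter (fun z => z + z⁻¹ = u)).card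
      = 2^(m+1) - 2 := by
    have htot := Finset.add_sum_erase Kfin
      (fun u => ((Afin ∪ Bfin).filter (fun z => z + z⁻¹ = u)).card) h0K
    rw [hfib0card, hsumfib] at htot
    have h1 : (1:ℕ) ≤ 2^(m+1) := Nat.one_le_two_pow
    omega
  have hfib2 : ∀ u ∈ Kfin.erase 0,
      ((Afin ∪ Bfin).filter (fun z => z + z⁻¹ = u)).card = 2 := by
    by_contra hcon
    push_neg at hcon
    obtain ⟨u0, hu0, hu0ne⟩ := hcon
    have hlt : ∑ u ∈ Kfin.erase 0, ((Afin ∪ Bfin).filter (fun z => z + z⁻¹ = u)).card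
        < ∑ _u ∈ Kfin.erase 0, 2 := by
      apply Finset.sum_lt_sum (fun i _ => hfible i)
      exact ⟨u0, hu0, lt_of_le_of_ne (hfible u0) hu0ne⟩
    rw [Finset.sum_const, hsum_erase, Finset.card_erase_of_mem h0K, hcardK, smul_eq_mul] at hlt
    have h1 : (1:ℕ) ≤ 2^m := Nat.one_le_two_pow
    rw [pow_succ] at hlt
    omega
  -- the union sum
  have hg0 : g 0 = 1 := by
    simp [hg, trM_zero, eps]
  have hsumK : ∑ u ∈ Kfin, g u = 0 := sum_eps_K_mul hm hcard hμK hμ0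
  have hsum_union : ∑ z ∈ Afin ∪ Bfin, g (z + z⁻¹) = -1 := by
    rw [← Finset.sum_fiberwise_of_maps_to hmapsto (fun z => g (z + z⁻¹))]
    have hinner : ∀ u ∈ Kfin, ∑ z ∈ (Afin ∪ Bfin).filter (fun z => z + z⁻¹ = u),
        g (z + z⁻¹) = (((Afin ∪ Bfin).filter (fun z => z + z⁻¹ = u)).card : ℤ) * g u := by
      intro u _
      rw [Finset.sum_congr rfl (fun z hz => by
        rw [(Finset.mem_filter.mp hz).2]), Finset.sum_const, nsmul_eq_mul]
    have herase : ∑ u ∈ Kfin.erase 0, g u = -1 := by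
      have h := Finset.add_sum_erase Kfin g h0K
      rw [hsumK, hg0] at h
      omega
    rw [Finset.sum_congr rfl hinner]
    rw [← Finset.add_sum_erase Kfin _ h0K]
    rw [hfib0card, Finset.sum_congr rfl (fun u hu => by rw [hfib2 u hu])]
    push_cast
    rw [← Finset.mul_sum, herase, hg0]
    norm_num
  -- conclusion
  have hsplit := Finset.sum_union_inter (s₁ := Afin) (s₂ := Bfin)
    (f := fun z => g (z + z⁻¹))
  rw [hinter] at hsplit
  have hsingle : ∑ z ∈ ({1} : Finset F), g (z + z⁻¹) = 1 := by
    rw [Finset.sum_singleton, inv_one, h11, hg0]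
  rw [hsum_union, hsingle] at hsplit
  have hBsum : ∑ z ∈ Bfin, g (z + z⁻¹) = klooM m μ := (klooM_eq hm hμK hμ0).symm
  rw [hBsum] at hsplit
  have : ∑ z ∈ Afin, g (z + z⁻¹) = - klooM m μ := by omega
  exact this
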